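/- Let k be a nonnegative integer and 0 < α < 1. The map u ↦ M(ξ)·u, where M(ξ) is the 2×2 real matrix [[Re ξ, Im ξ], [-Im ξ, Re ξ]] for ξ ∈ bΔ, is a Banach space isomorphism from (C^{k,α}_o)² onto (C^{k,α}_e)², where C^{k,α}_o and C^{k,α}_e are respectively the odd and even real-valued C^{k,α} functions on bΔ. -/

import Mathlib

noncomputable section

open Complex Metric Set Finset
open scoped Classical

/-- The closed unit disc in `ℂ`, as a type. -/
abbrev ClosedDisc : Type := (Metric.closedBall (0 : ℂ) 1 : Set ℂ)

/-- The inclusion of the unit circle `bΔ` into the closed unit disc. -/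
def bd (z : Circle) : ClosedDisc :=
  ⟨(z : ℂ), by simp [Metric.mem_closedBall, dist_zero_right, Circle.norm_coe]⟩

/-- Negation on the circle. -/
def negCircle (z : Circle) : Circle :=
  ⟨-(z : ℂ), mem_sphere_zero_iff_norm.2 (by simp [Circle.norm_coe])⟩

/-- The angular lift of a function on the unit circle. -/
def liftC (f : Circle → ℂ) : ℝ → ℂ := fun θ => f (Circle.exp θ)

/-- `f` belongs to `C^{k,α}_ℂ(bΔ)`: its angular lift is `C^k` and the `k`-th derivative of the
lift is `α`-Hölder. -/
def IsCkC (k : ℕ) (α : ℝ) (f : Circle → ℂ) : Prop :=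
  ContDiff ℝ (k : ℕ∞) (liftC f) ∧
    ∃ C : NNReal, HolderWith C α.toNNReal (iteratedDeriv k (liftC f))

/-- `f` takes real values. -/
def IsRealValued (f : Circle → ℂ) : Prop := ∀ z, (f z).im = 0

/-- The space `C^{k,α} = C^{k,α}(bΔ, ℝ)` of real-valued Hölder functions. -/
def CkR (k : ℕ) (α : ℝ) : Set (Circle → ℂ) := {f | IsCkC k α f ∧ IsRealValued f}

/-- The space `C^{k,α}_ℂ`. -/
def CkC (k : ℕ) (α : ℝ) : Set (Circle → ℂ) := {f | IsCkC k α f}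

/-- The odd real-valued functions of class `C^{k,α}`. -/
def CkOdd (k : ℕ) (α : ℝ) : Set (Circle → ℂ) :=
  {f | IsCkC k α f ∧ IsRealValued f ∧ ∀ z : Circle, f (negCircle z) = -f z}

/-- The even real-valued functions of class `C^{k,α}`. -/
def CkEven (k : ℕ) (α : ℝ) : Set (Circle → ℂ) :=
  {f | IsCkC k α f ∧ IsRealValued f ∧ ∀ z : Circle, f (negCircle z) = f z}

/-- The subspace `R_m = {v ∈ C^{k,α}_ℂ | v(ζ) = (-1)^m ζ^{-m} conj (v ζ)}`. -/
def Rm (k : ℕ) (α : ℝ) (m : ℤ) : Set (Circle → ℂ) :=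
  {v | IsCkC k α v ∧
    ∀ z : Circle, v z = (-1 : ℂ) ^ m * (z : ℂ) ^ (-m) * (starRingEnd ℂ) (v z)}

/-- The space `C^{k,α}_{0^m}` of real-valued functions of the form `(1-ζ)^m v`,
`v ∈ C^{k,α}_ℂ`. -/
def C0m (k : ℕ) (α : ℝ) (m : ℕ) : Set (Circle → ℂ) :=
  {φ | IsRealValued φ ∧ ∃ v, IsCkC k α v ∧ ∀ z : Circle, φ z = (1 - (z : ℂ)) ^ m * v z}

/-- Sup norm of the lift. -/
def supN (g : ℝ → ℂ) : ℝ := ⨆ θ : ℝ, ‖g θ‖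

/-- Hölder seminorm (computed through the angular lift). -/
def holderSem (α : ℝ) (g : ℝ → ℂ) : ℝ :=
  ⨆ p : ℝ × ℝ, if (Circle.exp p.1 : ℂ) = Circle.exp p.2 then 0
    else ‖g p.1 - g p.2‖ / ‖(Circle.exp p.1 : ℂ) - (Circle.exp p.2 : ℂ)‖ ^ α

/-- The `C^{k,α}` norm. -/
def normCkR (k : ℕ) (α : ℝ) (f : Circle → ℂ) : ℝ :=
  (∑ j ∈ Finset.range (k + 1), supN (iteratedDeriv j (liftC f))) +
    holderSem α (iteratedDeriv k (liftC f))

/-- The `C^{k,α}_ℂ` norm `‖Re v‖ + ‖Im v‖`. -/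
def normCkC (k : ℕ) (α : ℝ) (f : Circle → ℂ) : ℝ :=
  normCkR k α (fun z => ((f z).re : ℂ)) + normCkR k α (fun z => ((f z).im : ℂ))

/-- The norm of `C^{k,α}_{0^m}`: `‖(1-ζ)^m v‖ = ‖v‖_{C^{k,α}_ℂ}`. -/
def normC0m (k : ℕ) (α : ℝ) (m : ℕ) (φ : Circle → ℂ) : ℝ :=
  sInf {r | ∃ v, IsCkC k α v ∧ (∀ z : Circle, φ z = (1 - (z : ℂ)) ^ m * v z) ∧
    r = normCkC k α v}

/-- Extension of a function on the closed disc to the plane (by junk value `0`). -/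
def extD (f : ClosedDisc → ℂ) : ℂ → ℂ :=
  fun z => if h : z ∈ Metric.closedBall (0 : ℂ) 1 then f ⟨z, h⟩ else 0

/-- Boundary trace of a function on the closed disc. -/
def bTrace (f : ClosedDisc → ℂ) : Circle → ℂ := fun z => f (bd z)

/-- `f ∈ A^{k,α}`: `f` is continuous on the closed disc, holomorphic on the open disc, and its
boundary trace is of class `C^{k,α}_ℂ`. -/
def IsA (k : ℕ) (α : ℝ) (f : ClosedDisc → ℂ) : Prop :=
  ContinuousOn (extD f) (Metric.closedBall 0 1) ∧
    DifferentiableOn ℂ (extD f) (Metric.ball 0 1) ∧ IsCkC k α (bTrace f)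

/-- The space `(1-ζ)^m A^{k,α}`. -/
def mA (k : ℕ) (α : ℝ) (m : ℕ) : Set (ClosedDisc → ℂ) :=
  {φ | ∃ f, IsA k α f ∧ ∀ z : ClosedDisc, φ z = (1 - (z : ℂ)) ^ m * f z}

/-- The norm of `A^{k,α}` (the `C^{k,α}_ℂ` norm of the boundary trace). -/
def normA (k : ℕ) (α : ℝ) (f : ClosedDisc → ℂ) : ℝ := normCkC k α (bTrace f)

/-- The norm of `(1-ζ)^m A^{k,α}`: `‖(1-ζ)^m f‖ = ‖f‖`. -/
def normmA (k : ℕ) (α : ℝ) (m : ℕ) (φ : ClosedDisc → ℂ) : ℝ :=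
  sInf {r | ∃ f, IsA k α f ∧ (∀ z : ClosedDisc, φ z = (1 - (z : ℂ)) ^ m * f z) ∧
    r = normA k α f}

/-- A subset `K` of a real vector space (in practice, a linear subspace) has real dimension `d`:
there are `d` linearly independent elements of `K` spanning `K`. -/
def HasRealDim {X : Type*} [AddCommGroup X] [Module ℝ X] (K : Set X) (d : ℕ) : Prop :=
  ∃ b : Fin d → X, (∀ i, b i ∈ K) ∧ LinearIndependent ℝ b ∧
    ∀ f ∈ K, ∃ c : Fin d → ℝ, f = ∑ i, c i • b i



def CH (α C : ℝ) (h : ℝ → ℂ) : Prop :=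
  ∀ a b : ℝ, ‖h a - h b‖ ≤ C * ‖((Circle.exp a : ℂ)) - ((Circle.exp b : ℂ))‖ ^ α

lemma periodic_liftC (f : Circle → ℂ) : Function.Periodic (liftC f) (2 * Real.pi) :=
  fun θ => congrArg f (Circle.periodic_exp θ)

lemma periodic_deriv {g : ℝ → ℂ} (h : Function.Periodic g (2 * Real.pi)) :
    Function.Periodic (deriv g) (2 * Real.pi) := by
  intro θ
  have h2 : (fun x => g (x + 2 * Real.pi)) = g := funext h
  rw [← deriv_comp_add_const, h2]

lemma periodic_iD {g : ℝ → ℂ} (h : Function.Periodic g (2 * Real.pi)) (n : ℕ) :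
    Function.Periodic (iteratedDeriv n g) (2 * Real.pi) := by
  induction n with
  | zero => simpa using h
  | succ n ih => rw [iteratedDeriv_succ]; exact periodic_deriv ih

lemma bdd_of_periodic_continuous {g : ℝ → ℂ} (hg : Continuous g)
    (hper : Function.Periodic g (2 * Real.pi)) : ∃ B, 0 ≤ B ∧ ∀ θ, ‖g θ‖ ≤ B := by
  obtain ⟨C, hC⟩ := (isCompact_Icc (a := (0:ℝ)) (b := 2 * Real.pi)).exists_bound_of_continuousOn
    hg.continuousOn
  refine ⟨max C 0, le_max_right _ _, fun θ => ?_⟩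
  obtain ⟨y, hy, hgy⟩ := hper.exists_mem_Ico₀ (by positivity) θ
  rw [hgy]
  exact le_max_of_le_left (hC y (Ico_subset_Icc_self hy))

lemma supN_nonneg (g : ℝ → ℂ) : 0 ≤ supN g :=
  Real.iSup_nonneg fun θ => norm_nonneg _

lemma supN_le {g : ℝ → ℂ} {B : ℝ} (hB : 0 ≤ B) (h : ∀ θ, ‖g θ‖ ≤ B) : supN g ≤ B :=
  ciSup_le h

lemma le_supN {g : ℝ → ℂ} {B : ℝ} (h : ∀ θ, ‖g θ‖ ≤ B) (θ : ℝ) : ‖g θ‖ ≤ supN g :=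
  le_ciSup ⟨B, fun _ ⟨θ', hθ'⟩ => hθ' ▸ h θ'⟩ θ

lemma holderSem_nonneg (α : ℝ) (g : ℝ → ℂ) : 0 ≤ holderSem α g :=
  Real.iSup_nonneg fun p => by
    split
    · exact le_refl 0
    · positivity


lemma two_I_sin (d : ℂ) :
    Complex.exp (d * Complex.I) - Complex.exp (-d * Complex.I) = 2 * Complex.I * Complex.sin d := by
  rw [Complex.sin]
  field_simp
  ring_nf
  rw [Complex.I_sq]
  ring

lemma ce_sub (a b : ℝ) :
    ‖((Circle.exp a : ℂ)) - ((Circle.exp b : ℂ))‖ = 2 * |Real.sin ((a - b) / 2)| := by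
  rw [Circle.coe_exp, Circle.coe_exp]
  have h : Complex.exp (↑a * Complex.I) - Complex.exp (↑b * Complex.I)
      = Complex.exp (↑((a + b) / 2) * Complex.I) *
        (Complex.exp (↑((a - b) / 2) * Complex.I) - Complex.exp (-↑((a - b) / 2) * Complex.I)) := by
    rw [mul_sub, ← Complex.exp_add, ← Complex.exp_add]
    congr 2 <;> · push_cast; ring
  rw [h, two_I_sin, norm_mul]
  have h1 : ‖Complex.exp (↑((a + b) / 2) * Complex.I)‖ = 1 := by
    rw [Complex.norm_exp_ofReal_mul_I]
  have h2 : ((a : ℂ) - b) / 2 = ((((a - b) / 2 : ℝ)) : ℂ) := by push_cast; ring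
  rw [h1, one_mul, norm_mul, norm_mul, ← Complex.ofReal_sin]
  simp
  rw [h2, ← Complex.ofReal_sin, Complex.norm_real, Real.norm_eq_abs]



lemma ce_le (a b : ℝ) : ‖((Circle.exp a : ℂ)) - ((Circle.exp b : ℂ))‖ ≤ |a - b| := by
  rw [ce_sub]
  have := Real.abs_sin_le_abs (x := (a - b) / 2)
  rw [abs_div, _root_.abs_two] at this
  linarith

lemma ce_le_two (a b : ℝ) : ‖((Circle.exp a : ℂ)) - ((Circle.exp b : ℂ))‖ ≤ 2 := by
  have h1 : ‖((Circle.exp a : ℂ))‖ = 1 := by simp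
  have h2 : ‖((Circle.exp b : ℂ))‖ = 1 := by simp
  calc ‖((Circle.exp a : ℂ)) - ((Circle.exp b : ℂ))‖ ≤ _ := norm_sub_le _ _
    _ ≤ 2 := by rw [h1, h2]; norm_num

lemma ce_lower {a b : ℝ} (h : |a - b| ≤ Real.pi) :
    |a - b| ≤ (Real.pi / 2) * ‖((Circle.exp a : ℂ)) - ((Circle.exp b : ℂ))‖ := by
  rw [ce_sub]
  have h0 : |(a - b) / 2| ≤ Real.pi / 2 := by rw [abs_div, _root_.abs_two]; linarith
  have h1 := Real.mul_abs_le_abs_sin (x := (a - b) / 2) h0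
  have hpi := Real.pi_pos
  have h2 := mul_le_mul_of_nonneg_left h1 (le_of_lt hpi)
  have h3 : Real.pi * (2 / Real.pi * |(a - b) / 2|) = |a - b| := by
    rw [abs_div, _root_.abs_two]; field_simp
  rw [h3] at h2
  linarith [h2]

lemma exists_shift (a b : ℝ) : ∃ n : ℤ, |a - (b + n * (2 * Real.pi))| ≤ Real.pi := by
  have hpi := Real.pi_pos
  refine ⟨round ((a - b) / (2 * Real.pi)), ?_⟩
  have h1 : a - (b + round ((a - b) / (2 * Real.pi)) * (2 * Real.pi))
      = ((a - b) / (2 * Real.pi) - round ((a - b) / (2 * Real.pi))) * (2 * Real.pi) := by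
    field_simp
    ring
  rw [h1, abs_mul, abs_of_pos (by linarith : (0:ℝ) < 2 * Real.pi)]
  have := abs_sub_round ((a - b) / (2 * Real.pi))
  nlinarith [abs_nonneg ((a - b) / (2 * Real.pi) - round ((a - b) / (2 * Real.pi)))]

lemma ce_eq_iff {a b : ℝ} : Circle.exp a = Circle.exp b ↔ ∃ n : ℤ, a = b + n * (2 * Real.pi) :=
  Circle.exp_eq_exp

lemma holderSem_le {α C : ℝ} {g : ℝ → ℂ} (hC : 0 ≤ C) (h : CH α C g) : holderSem α g ≤ C := by
  refine ciSup_le fun p => ?_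
  split
  · exact hC
  · rename_i hne
    have hpos : (0:ℝ) < ‖((Circle.exp p.1 : ℂ)) - Circle.exp p.2‖ ^ α := by
      apply Real.rpow_pos_of_pos
      rw [norm_pos_iff, sub_ne_zero]
      exact hne
    rw [div_le_iff₀ hpos]
    exact h p.1 p.2

lemma hS_bddAbove {α C : ℝ} {g : ℝ → ℂ} (h : CH α C g) :
    BddAbove (Set.range fun p : ℝ × ℝ => if (Circle.exp p.1 : ℂ) = Circle.exp p.2 then 0
      else ‖g p.1 - g p.2‖ / ‖(Circle.exp p.1 : ℂ) - (Circle.exp p.2 : ℂ)‖ ^ α) := by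
  refine ⟨max C 0, fun x ⟨p, hp⟩ => ?_⟩
  subst hp
  dsimp only
  split
  · exact le_max_right _ _
  · rename_i hne
    have hpos : (0:ℝ) < ‖((Circle.exp p.1 : ℂ)) - Circle.exp p.2‖ ^ α := by
      apply Real.rpow_pos_of_pos
      rw [norm_pos_iff, sub_ne_zero]
      exact hne
    refine le_max_of_le_left ?_
    rw [div_le_iff₀ hpos]
    exact h p.1 p.2

lemma eq_of_ce_eq {g : ℝ → ℂ} (hper : Function.Periodic g (2 * Real.pi)) {a b : ℝ}
    (h : (Circle.exp a : ℂ) = Circle.exp b) : g a = g b := by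
  obtain ⟨n, hn⟩ := Circle.exp_eq_exp.1 (Subtype.ext h)
  subst hn
  have := hper.sub_int_mul_eq (x := b + n * (2 * Real.pi)) n
  simpa using this.symm

lemma CH_holderSem {α C : ℝ} {g : ℝ → ℂ} (hα : 0 < α)
    (hper : Function.Periodic g (2 * Real.pi)) (h : CH α C g) :
    CH α (holderSem α g) g := by
  intro a b
  by_cases hab : (Circle.exp a : ℂ) = Circle.exp b
  · rw [eq_of_ce_eq hper hab]
    simp [hab, sub_eq_zero.2, Real.zero_rpow hα.ne']
  · have hpos : (0:ℝ) < ‖((Circle.exp a : ℂ)) - Circle.exp b‖ ^ α := by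
      apply Real.rpow_pos_of_pos
      rw [norm_pos_iff, sub_ne_zero]
      exact hab
    have hle := le_ciSup (hS_bddAbove h) (a, b)
    simp only [hab, if_false] at hle
    have := mul_le_mul_of_nonneg_right hle (le_of_lt hpos)
    rwa [div_mul_cancel₀ _ hpos.ne'] at this

lemma rpow_self_le {t α : ℝ} (ht : 0 ≤ t) (ht2 : t ≤ 2) (hα : 0 < α) (hα' : α ≤ 1) :
    t ≤ 2 * t ^ α := by
  rcases eq_or_lt_of_le ht with h0 | h0
  · rw [← h0, Real.zero_rpow hα.ne']; norm_num
  · have h1 : t = t ^ α * t ^ (1 - α) := by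
      rw [← Real.rpow_add h0]; norm_num
    have h2 : t ^ (1 - α) ≤ 2 ^ (1 - α) :=
      Real.rpow_le_rpow ht ht2 (by linarith)
    have h3 : (2:ℝ) ^ (1 - α) ≤ 2 ^ (1:ℝ) :=
      Real.rpow_le_rpow_of_exponent_le (by norm_num) (by linarith)
    rw [Real.rpow_one] at h3
    have h4 : (0:ℝ) ≤ t ^ α := (Real.rpow_pos_of_pos h0 α).le
    calc t = t ^ α * t ^ (1 - α) := h1
      _ ≤ t ^ α * 2 := by nlinarith
      _ = 2 * t ^ α := by ring

lemma CH_of_lip {α L : ℝ} {g : ℝ → ℂ} (hα : 0 < α) (hα' : α ≤ 1) (hL : 0 ≤ L)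
    (hper : Function.Periodic g (2 * Real.pi))
    (h : ∀ a b : ℝ, ‖g a - g b‖ ≤ L * |a - b|) : CH α (Real.pi * L) g := by
  intro a b
  obtain ⟨n, hn⟩ := exists_shift a b
  set b' := b + n * (2 * Real.pi) with hb'
  have hgb : g b' = g b := by
    have := hper.sub_int_mul_eq (x := b') n
    simpa [hb'] using this.symm
  have hce : (Circle.exp b' : ℂ) = Circle.exp b := by
    exact congrArg _ (Circle.exp_eq_exp.2 ⟨n, rfl⟩)
  have h1 : ‖g a - g b‖ ≤ L * |a - b'| := by rw [← hgb]; exact h a b'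
  have h2 : |a - b'| ≤ Real.pi / 2 * ‖(Circle.exp a : ℂ) - Circle.exp b'‖ := ce_lower hn
  set t := ‖(Circle.exp a : ℂ) - Circle.exp b‖ with htdef
  have ht : 0 ≤ t := norm_nonneg _
  have ht2 : t ≤ 2 := ce_le_two a b
  have h3 : t ≤ 2 * t ^ α := rpow_self_le ht ht2 hα hα'
  have hpi := Real.pi_pos
  calc ‖g a - g b‖ ≤ L * |a - b'| := h1
    _ ≤ L * (Real.pi / 2 * t) := by rw [htdef, ← hce]; exact mul_le_mul_of_nonneg_left h2 hL
    _ ≤ L * (Real.pi / 2 * (2 * t ^ α)) := by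
        have : (0:ℝ) ≤ L * (Real.pi / 2) := by positivity
        nlinarith [Real.rpow_nonneg ht α]
    _ = Real.pi * L * t ^ α := by ring

lemma CH_of_holderWith {α : ℝ} {Cn : NNReal} {g : ℝ → ℂ} (hα : 0 < α) (hα' : α ≤ 1)
    (hper : Function.Periodic g (2 * Real.pi))
    (h : HolderWith Cn α.toNNReal g) :
    CH α ((Cn : ℝ) * (Real.pi / 2) ^ α) g := by
  intro a b
  obtain ⟨n, hn⟩ := exists_shift a b
  set b' := b + n * (2 * Real.pi) with hb'
  have hgb : g b' = g b := by
    have := hper.sub_int_mul_eq (x := b') n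
    simpa [hb'] using this.symm
  have hce : (Circle.exp b' : ℂ) = Circle.exp b := by
    exact congrArg _ (Circle.exp_eq_exp.2 ⟨n, rfl⟩)
  have h1 : dist (g a) (g b') ≤ (Cn : ℝ) * dist a b' ^ (α.toNNReal : ℝ) := h.dist_le a b'
  rw [Real.coe_toNNReal α hα.le] at h1
  rw [← hgb, ← hce]
  rw [dist_eq_norm] at h1
  set t := ‖(Circle.exp a : ℂ) - Circle.exp b'‖ with htdef
  have h2 : |a - b'| ≤ Real.pi / 2 * t := ce_lower hn
  have h3 : dist a b' ^ α ≤ (Real.pi / 2 * t) ^ α := by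
    apply Real.rpow_le_rpow dist_nonneg _ hα.le
    rw [Real.dist_eq]; exact h2
  have h4 : (Real.pi / 2 * t) ^ α = (Real.pi / 2) ^ α * t ^ α := by
    apply Real.mul_rpow (by positivity) (norm_nonneg _)
  calc ‖g a - g b'‖ ≤ (Cn : ℝ) * dist a b' ^ α := h1
    _ ≤ (Cn : ℝ) * ((Real.pi / 2) ^ α * t ^ α) := by
        rw [← h4]; exact mul_le_mul_of_nonneg_left h3 Cn.coe_nonneg
    _ = (Cn : ℝ) * (Real.pi / 2) ^ α * t ^ α := by ring

lemma holderWith_of_CH {α C : ℝ} {g : ℝ → ℂ} (hα : 0 ≤ α) (hC : 0 ≤ C) (h : CH α C g) :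
    HolderWith C.toNNReal α.toNNReal g := by
  intro a b
  have h1 : ‖g a - g b‖ ≤ C * |a - b| ^ α := by
    calc ‖g a - g b‖ ≤ C * ‖(Circle.exp a : ℂ) - Circle.exp b‖ ^ α := h a b
      _ ≤ C * |a - b| ^ α := by
          apply mul_le_mul_of_nonneg_left _ hC
          exact Real.rpow_le_rpow (norm_nonneg _) (ce_le a b) hα
  rw [edist_dist, edist_dist, dist_eq_norm, Real.dist_eq]
  calc ENNReal.ofReal ‖g a - g b‖ ≤ ENNReal.ofReal (C * |a - b| ^ α) :=
        ENNReal.ofReal_le_ofReal h1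
    _ = ENNReal.ofReal C * ENNReal.ofReal (|a - b| ^ α) := ENNReal.ofReal_mul hC
    _ = (C.toNNReal : ENNReal) * ENNReal.ofReal |a - b| ^ (α.toNNReal : ℝ) := by
        rw [← ENNReal.ofReal_rpow_of_nonneg (abs_nonneg _) hα, Real.coe_toNNReal α hα]
        rfl


lemma choose_sum_shift (n : ℕ) (a : ℕ → ℂ) :
    ∑ i ∈ Finset.range (n+1), (n.choose i : ℂ) * a (i+1)
      + ∑ i ∈ Finset.range (n+1), (n.choose i : ℂ) * a i
    = ∑ i ∈ Finset.range (n+2), ((n+1).choose i : ℂ) * a i := by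
  rw [Finset.sum_range_succ' (fun i => ((n+1).choose i : ℂ) * a i) (n+1)]
  have h1 : ∀ i, (((n+1).choose (i+1) : ℕ) : ℂ) = (n.choose i : ℂ) + (n.choose (i+1) : ℂ) := by
    intro i; rw [Nat.choose_succ_succ]; push_cast; ring
  simp only [h1]
  rw [Finset.sum_range_succ' (fun i => (n.choose i : ℂ) * a i) n]
  have h2 : ∑ i ∈ Finset.range (n+1), ((n.choose (i+1) : ℂ)) * a (i+1)
      = ∑ i ∈ Finset.range n, ((n.choose (i+1) : ℂ)) * a (i+1) := by
    rw [Finset.sum_range_succ]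
    simp [Nat.choose_succ_self]
  simp only [add_mul]
  rw [Finset.sum_add_distrib]
  rw [h2]
  simp [Nat.choose_zero_right]
  ring

lemma leibniz {e : ℝ → ℂ} (he : ∀ m : ℕ, ContDiff ℝ (m : ℕ∞) e) :
    ∀ (n : ℕ) (g : ℝ → ℂ), ContDiff ℝ (n : ℕ∞) g →
      iteratedDeriv n (fun x => e x * g x)
        = fun x => ∑ i ∈ Finset.range (n + 1),
            (n.choose i : ℂ) * (iteratedDeriv i e x * iteratedDeriv (n - i) g x) := by
  intro n
  induction n with
  | zero => intro g hg; simp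
  | succ n ih =>
    intro g hg
    have hg' : ContDiff ℝ (n : ℕ∞) g := hg.of_le (by exact_mod_cast Nat.cast_le.2 (Nat.le_succ n))
    rw [iteratedDeriv_succ, ih g hg']
    funext x
    have hde : ∀ i : ℕ, DifferentiableAt ℝ (iteratedDeriv i e) x := by
      intro i
      exact ((he (i+1)).differentiable_iteratedDeriv i
        (by exact_mod_cast Nat.lt_succ_self i)).differentiableAt
    have hdg : ∀ i : ℕ, i ≤ n → DifferentiableAt ℝ (iteratedDeriv (n - i) g) x := by
      intro i hi
      exact (hg.differentiable_iteratedDeriv (n - i)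
        (by exact_mod_cast Nat.cast_lt.2 (Nat.lt_succ_of_le (Nat.sub_le n i)))).differentiableAt
    have hterm : ∀ i ∈ Finset.range (n+1), DifferentiableAt ℝ
        (fun x => (n.choose i : ℂ) * (iteratedDeriv i e x * iteratedDeriv (n - i) g x)) x := by
      intro i hi
      exact (((hde i).mul (hdg i (Nat.lt_succ_iff.1 (Finset.mem_range.1 hi)))).const_mul _)
    rw [deriv_fun_sum hterm]
    have hstep : ∀ i ∈ Finset.range (n+1),
        deriv (fun x => (n.choose i : ℂ) * (iteratedDeriv i e x * iteratedDeriv (n - i) g x)) x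
        = (n.choose i : ℂ) * (iteratedDeriv (i+1) e x * iteratedDeriv (n - i) g x)
          + (n.choose i : ℂ) * (iteratedDeriv i e x * iteratedDeriv (n - i + 1) g x) := by
      intro i hi
      have hA : HasDerivAt (iteratedDeriv i e) (iteratedDeriv (i+1) e x) x := by
        rw [iteratedDeriv_succ]; exact (hde i).hasDerivAt
      have hB : HasDerivAt (iteratedDeriv (n - i) g) (iteratedDeriv (n - i + 1) g x) x := by
        rw [iteratedDeriv_succ]
        exact (hdg i (Nat.lt_succ_iff.1 (Finset.mem_range.1 hi))).hasDerivAt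
      have := ((hA.mul hB).const_mul ((n.choose i : ℂ))).deriv
      erw [this]
      ring
    rw [Finset.sum_congr rfl hstep, Finset.sum_add_distrib]
    have e1 : ∑ i ∈ Finset.range (n+1),
        (n.choose i : ℂ) * (iteratedDeriv (i+1) e x * iteratedDeriv (n - i) g x)
        = ∑ i ∈ Finset.range (n+1), (n.choose i : ℂ)
            * (fun j => iteratedDeriv j e x * iteratedDeriv (n + 1 - j) g x) (i+1) := by
      apply Finset.sum_congr rfl
      intro i hi
      have : n - i = n + 1 - (i + 1) := by omega
      rw [this]
    have e2 : ∑ i ∈ Finset.range (n+1),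
        (n.choose i : ℂ) * (iteratedDeriv i e x * iteratedDeriv (n - i + 1) g x)
        = ∑ i ∈ Finset.range (n+1), (n.choose i : ℂ)
            * (fun j => iteratedDeriv j e x * iteratedDeriv (n + 1 - j) g x) i := by
      apply Finset.sum_congr rfl
      intro i hi
      have : n - i + 1 = n + 1 - i := by
        have := Nat.lt_succ_iff.1 (Finset.mem_range.1 hi); omega
      rw [this]
    rw [e1, e2, choose_sum_shift n (fun j => iteratedDeriv j e x * iteratedDeriv (n + 1 - j) g x)]


lemma iD_cosC (n : ℕ) :
    iteratedDeriv n (fun θ : ℝ => ((Real.cos θ : ℝ) : ℂ))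
      = fun θ => ((Real.cos (θ + n * (Real.pi / 2)) : ℝ) : ℂ) := by
  induction n with
  | zero => funext θ; simp
  | succ n ih =>
    rw [iteratedDeriv_succ, ih]
    funext θ
    set c := (n : ℝ) * (Real.pi / 2) with hc
    have h : HasDerivAt (fun θ : ℝ => Real.cos (θ + c)) (-Real.sin (θ + c)) θ := by
      simpa [Function.comp_def] using (Real.hasDerivAt_cos (θ + c)).comp θ ((hasDerivAt_id θ).add_const c)
    have h2 := h.ofReal_comp
    rw [h2.deriv]
    have h3 : -Real.sin (θ + c) = Real.cos (θ + (n + 1 : ℕ) * (Real.pi / 2)) := by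
      rw [← Real.cos_add_pi_div_two]
      congr 1
      push_cast [hc]; ring
    rw [h3]

lemma iD_sinC (n : ℕ) :
    iteratedDeriv n (fun θ : ℝ => ((Real.sin θ : ℝ) : ℂ))
      = fun θ => ((Real.sin (θ + n * (Real.pi / 2)) : ℝ) : ℂ) := by
  induction n with
  | zero => funext θ; simp
  | succ n ih =>
    rw [iteratedDeriv_succ, ih]
    funext θ
    set c := (n : ℝ) * (Real.pi / 2) with hc
    have h : HasDerivAt (fun θ : ℝ => Real.sin (θ + c)) (Real.cos (θ + c)) θ := by
      simpa [Function.comp_def] using (Real.hasDerivAt_sin (θ + c)).comp θ ((hasDerivAt_id θ).add_const c)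
    have h2 := h.ofReal_comp
    rw [h2.deriv]
    have h3 : Real.cos (θ + c) = Real.sin (θ + (n + 1 : ℕ) * (Real.pi / 2)) := by
      rw [← Real.sin_add_pi_div_two]
      congr 1
      push_cast [hc]; ring
    rw [h3]

lemma cosC_contDiff : ∀ m : ℕ, ContDiff ℝ (m : ℕ∞) (fun θ : ℝ => ((Real.cos θ : ℝ) : ℂ)) :=
  fun _ => Complex.ofRealCLM.contDiff.comp Real.contDiff_cos |>.of_le le_top
lemma sinC_contDiff : ∀ m : ℕ, ContDiff ℝ (m : ℕ∞) (fun θ : ℝ => ((Real.sin θ : ℝ) : ℂ)) :=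
  fun _ => Complex.ofRealCLM.contDiff.comp Real.contDiff_sin |>.of_le le_top

lemma cosC_bound (n : ℕ) (θ : ℝ) :
    ‖iteratedDeriv n (fun θ : ℝ => ((Real.cos θ : ℝ) : ℂ)) θ‖ ≤ 1 := by
  rw [iD_cosC]
  rw [Complex.norm_real, Real.norm_eq_abs]
  exact Real.abs_cos_le_one _
lemma sinC_bound (n : ℕ) (θ : ℝ) :
    ‖iteratedDeriv n (fun θ : ℝ => ((Real.sin θ : ℝ) : ℂ)) θ‖ ≤ 1 := by
  rw [iD_sinC]
  rw [Complex.norm_real, Real.norm_eq_abs]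
  exact Real.abs_sin_le_one _



lemma isCkC_bdd {k n : ℕ} {α : ℝ} {f : Circle → ℂ} (hf : IsCkC k α f) (hn : n ≤ k) :
    ∃ B, 0 ≤ B ∧ ∀ θ, ‖iteratedDeriv n (liftC f) θ‖ ≤ B :=
  bdd_of_periodic_continuous
    (hf.1.continuous_iteratedDeriv n (by exact_mod_cast Nat.cast_le.2 hn))
    (periodic_iD (periodic_liftC f) n)

lemma normCkR_nonneg (k : ℕ) (α : ℝ) (f : Circle → ℂ) : 0 ≤ normCkR k α f := by
  unfold normCkR
  have h1 : (0:ℝ) ≤ ∑ j ∈ Finset.range (k + 1), supN (iteratedDeriv j (liftC f)) :=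
    Finset.sum_nonneg fun j _ => supN_nonneg _
  linarith [holderSem_nonneg α (iteratedDeriv k (liftC f))]

lemma supN_le_normCkR {k n : ℕ} {α : ℝ} (f : Circle → ℂ) (hn : n ≤ k) :
    supN (iteratedDeriv n (liftC f)) ≤ normCkR k α f := by
  unfold normCkR
  have h1 : supN (iteratedDeriv n (liftC f))
      ≤ ∑ j ∈ Finset.range (k + 1), supN (iteratedDeriv j (liftC f)) :=
    Finset.single_le_sum (f := fun j => supN (iteratedDeriv j (liftC f))) (fun j _ => supN_nonneg _) (Finset.mem_range.2 (Nat.lt_succ_of_le hn))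
  linarith [holderSem_nonneg α (iteratedDeriv k (liftC f))]

lemma holderSem_le_normCkR (k : ℕ) (α : ℝ) (f : Circle → ℂ) :
    holderSem α (iteratedDeriv k (liftC f)) ≤ normCkR k α f := by
  unfold normCkR
  have h1 : (0:ℝ) ≤ ∑ j ∈ Finset.range (k + 1), supN (iteratedDeriv j (liftC f)) :=
    Finset.sum_nonneg fun j _ => supN_nonneg _
  linarith

lemma pointwise_le_normCkR {k n : ℕ} {α : ℝ} {f : Circle → ℂ} (hf : IsCkC k α f) (hn : n ≤ k)
    (θ : ℝ) : ‖iteratedDeriv n (liftC f) θ‖ ≤ normCkR k α f := by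
  obtain ⟨B, hB0, hB⟩ := isCkC_bdd hf hn
  exact le_trans (le_supN hB θ) (supN_le_normCkR f hn)

lemma isCkC_CH {k : ℕ} {α : ℝ} {f : Circle → ℂ} (hα : 0 < α) (hα' : α ≤ 1) (hf : IsCkC k α f) :
    CH α (holderSem α (iteratedDeriv k (liftC f))) (iteratedDeriv k (liftC f)) := by
  obtain ⟨Cn, hC⟩ := hf.2
  exact CH_holderSem hα (periodic_iD (periodic_liftC f) k)
    (CH_of_holderWith hα hα' (periodic_iD (periodic_liftC f) k) hC)

lemma lip_of_deriv {h : ℝ → ℂ} (hd : Differentiable ℝ h) {L : ℝ} (hL : 0 ≤ L)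
    (hb : ∀ θ, ‖deriv h θ‖ ≤ L) : ∀ a b, ‖h a - h b‖ ≤ L * |a - b| := by
  intro a b
  have hlip : LipschitzWith L.toNNReal h := by
    apply lipschitzWith_of_nnnorm_deriv_le hd
    intro x
    rw [← NNReal.coe_le_coe, coe_nnnorm, Real.coe_toNNReal L hL]
    exact hb x
  have h2 := hlip.dist_le_mul a b
  rwa [dist_eq_norm, Real.dist_eq, Real.coe_toNNReal L hL] at h2

lemma CH_mono {α c c' : ℝ} {h : ℝ → ℂ} (hcc : c ≤ c') (hc : CH α c h) : CH α c' h :=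
  fun a b => le_trans (hc a b)
    (mul_le_mul_of_nonneg_right hcc (Real.rpow_nonneg (norm_nonneg _) α))

lemma prod_diff (A B : ℝ → ℂ) (a b : ℝ) :
    ‖A a * B a - A b * B b‖ ≤ ‖A a‖ * ‖B a - B b‖ + ‖A a - A b‖ * ‖B b‖ := by
  have h : A a * B a - A b * B b = A a * (B a - B b) + (A a - A b) * B b := by ring
  rw [h]
  exact le_trans (norm_add_le _ _) (by rw [norm_mul, norm_mul])

def CkB (k : ℕ) : ℝ := ((k:ℝ) + 1) * 2^k + 2^k * (1 + 2*Real.pi)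

lemma CkB_pos (k : ℕ) : 0 < CkB k := by
  unfold CkB
  have := Real.pi_pos
  positivity

lemma key_mul {k : ℕ} {α : ℝ} (hα : 0 < α) (hα' : α ≤ 1)
    (E f : Circle → ℂ)
    (hE : ∀ m : ℕ, ContDiff ℝ (m : ℕ∞) (liftC E))
    (hEb : ∀ (n : ℕ) (θ : ℝ), ‖iteratedDeriv n (liftC E) θ‖ ≤ 1)
    (hf : IsCkC k α f) :
    IsCkC k α (fun z => E z * f z) ∧
      normCkR k α (fun z => E z * f z) ≤ CkB k * normCkR k α f := by
  have hpi := Real.pi_pos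
  set e := liftC E with he_def
  set g := liftC f with hg_def
  have hgC : ContDiff ℝ (k : ℕ∞) g := hf.1
  set N := normCkR k α f with hN
  have hN0 : 0 ≤ N := normCkR_nonneg k α f
  have hper_e : Function.Periodic e (2 * Real.pi) := periodic_liftC E
  have hper_g : Function.Periodic g (2 * Real.pi) := periodic_liftC f
  have hlift : liftC (fun z => E z * f z) = fun θ => e θ * g θ := rfl
  have hLeib : ∀ n : ℕ, n ≤ k → iteratedDeriv n (fun θ => e θ * g θ)
      = fun x => ∑ i ∈ Finset.range (n+1),
          ((n.choose i : ℂ)) * (iteratedDeriv i e x * iteratedDeriv (n-i) g x) :=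
    fun n hn => leibniz hE n g (hgC.of_le (by exact_mod_cast Nat.cast_le.2 hn))
  -- pointwise bounds on derivatives of the product
  have hsup : ∀ n : ℕ, n ≤ k → ∀ θ, ‖iteratedDeriv n (fun θ => e θ * g θ) θ‖ ≤ 2^k * N := by
    intro n hn θ
    rw [hLeib n hn]
    calc ‖∑ i ∈ Finset.range (n+1),
            ((n.choose i : ℂ)) * (iteratedDeriv i e θ * iteratedDeriv (n-i) g θ)‖
        ≤ ∑ i ∈ Finset.range (n+1),
            ‖((n.choose i : ℂ)) * (iteratedDeriv i e θ * iteratedDeriv (n-i) g θ)‖ :=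
          norm_sum_le _ _
      _ ≤ ∑ i ∈ Finset.range (n+1), ((n.choose i : ℝ)) * N := by
          apply Finset.sum_le_sum
          intro i hi
          rw [norm_mul, norm_mul]
          have h1 : ‖((n.choose i : ℕ) : ℂ)‖ = ((n.choose i : ℕ) : ℝ) := by simp
          rw [h1]
          apply mul_le_mul_of_nonneg_left _ (Nat.cast_nonneg _)
          calc ‖iteratedDeriv i e θ‖ * ‖iteratedDeriv (n-i) g θ‖
              ≤ 1 * N := mul_le_mul (hEb i θ)
                (pointwise_le_normCkR hf (le_trans (Nat.sub_le n i) hn) θ) (norm_nonneg _)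
                zero_le_one
            _ = N := one_mul N
      _ = (2^n : ℝ) * N := by
          rw [← Finset.sum_mul]
          congr 1
          exact_mod_cast Nat.sum_range_choose n
      _ ≤ 2^k * N := by
          apply mul_le_mul_of_nonneg_right _ hN0
          exact pow_le_pow_right₀ (by norm_num) hn
  -- the sup part of the norm
  have hsupsum : ∑ n ∈ Finset.range (k+1), supN (iteratedDeriv n (fun θ => e θ * g θ))
      ≤ ((k:ℝ)+1) * (2^k * N) := by
    calc ∑ n ∈ Finset.range (k+1), supN (iteratedDeriv n (fun θ => e θ * g θ))
        ≤ ∑ _n ∈ Finset.range (k+1), (2^k * N : ℝ) := by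
          apply Finset.sum_le_sum
          intro n hn
          exact supN_le (by positivity) (hsup n (Nat.lt_succ_iff.1 (Finset.mem_range.1 hn)))
      _ = ((k:ℝ)+1) * (2^k * N) := by
          rw [Finset.sum_const, Finset.card_range]
          push_cast
          ring
  -- Holder estimate
  have hCH : CH α (2^k * ((1 + 2*Real.pi) * N)) (iteratedDeriv k (fun θ => e θ * g θ)) := by
    intro a b
    rw [hLeib k le_rfl]
    set D := ‖((Circle.exp a : ℂ)) - Circle.exp b‖ ^ α with hD
    have hD0 : 0 ≤ D := Real.rpow_nonneg (norm_nonneg _) α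
    have hT : ∀ i ∈ Finset.range (k+1),
        ‖iteratedDeriv i e a * iteratedDeriv (k-i) g a
          - iteratedDeriv i e b * iteratedDeriv (k-i) g b‖ ≤ (1 + 2*Real.pi) * N * D := by
      intro i hi
      have hik : i ≤ k := Nat.lt_succ_iff.1 (Finset.mem_range.1 hi)
      by_cases hi0 : i = 0
      · subst hi0
        simp only [iteratedDeriv_zero, Nat.sub_zero]
        refine le_trans (prod_diff e (iteratedDeriv k g) a b) ?_
        have h1 : ‖e a‖ ≤ 1 := by
          have := hEb 0 a
          rwa [iteratedDeriv_zero] at this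
        have h2 : ‖iteratedDeriv k g a - iteratedDeriv k g b‖ ≤ N * D := by
          have hch := isCkC_CH hα hα' hf
          refine le_trans (hch a b) ?_
          exact mul_le_mul_of_nonneg_right (holderSem_le_normCkR k α f) hD0
        have h3 : ‖e a - e b‖ ≤ Real.pi * 1 * D := by
          have hde : Differentiable ℝ e :=
            (hE 1).differentiable (by simp)
          have hdb : ∀ θ, ‖deriv e θ‖ ≤ 1 := by
            intro θ
            have := hEb 1 θ
            rwa [iteratedDeriv_one] at this
          have hlip := lip_of_deriv hde zero_le_one hdb
          have hlip1 : ∀ x y : ℝ, ‖e x - e y‖ ≤ 1 * |x - y| := hlip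
          exact CH_of_lip hα hα' zero_le_one hper_e hlip1 a b
        have h4 : ‖iteratedDeriv k g b‖ ≤ N := pointwise_le_normCkR hf le_rfl b
        nlinarith [norm_nonneg (e a), norm_nonneg (iteratedDeriv k g b),
          norm_nonneg (e a - e b), norm_nonneg (iteratedDeriv k g a - iteratedDeriv k g b),
          mul_le_mul h1 h2 (norm_nonneg _) zero_le_one,
          mul_le_mul h3 h4 (norm_nonneg _) (by positivity : (0:ℝ) ≤ Real.pi * 1 * D)]
      · -- i ≥ 1 : Lipschitz term
        have hi1 : 1 ≤ i := Nat.one_le_iff_ne_zero.2 hi0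
        set Ti := fun x => iteratedDeriv i e x * iteratedDeriv (k-i) g x with hTi
        have hperT : Function.Periodic Ti (2 * Real.pi) := by
          intro θ
          simp only [hTi]
          rw [periodic_iD hper_e i θ, periodic_iD hper_g (k-i) θ]
        have hlipT : ∀ x y : ℝ, ‖Ti x - Ti y‖ ≤ (2*N) * |x - y| := by
          intro x y
          refine le_trans (prod_diff _ _ x y) ?_
          have hA1 : ‖iteratedDeriv i e x‖ ≤ 1 := hEb i x
          have hdA : Differentiable ℝ (iteratedDeriv i e) :=
            (hE (i+1)).differentiable_iteratedDeriv i
              (by exact_mod_cast Nat.cast_lt.2 (Nat.lt_succ_self i))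
          have hdbA : ∀ θ, ‖deriv (iteratedDeriv i e) θ‖ ≤ 1 := by
            intro θ
            have := hEb (i+1) θ
            rwa [iteratedDeriv_succ] at this
          have hlipA := lip_of_deriv hdA zero_le_one hdbA x y
          have hdB : Differentiable ℝ (iteratedDeriv (k-i) g) :=
            hgC.differentiable_iteratedDeriv (k-i)
              (by exact_mod_cast Nat.cast_lt.2 (by omega : k - i < k))
          have hdbB : ∀ θ, ‖deriv (iteratedDeriv (k-i) g) θ‖ ≤ N := by
            intro θ
            have h := pointwise_le_normCkR hf (by omega : k - i + 1 ≤ k) θ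
            rwa [iteratedDeriv_succ] at h
          have hlipB := lip_of_deriv hdB hN0 hdbB x y
          have hBb : ‖iteratedDeriv (k-i) g y‖ ≤ N :=
            pointwise_le_normCkR hf (by omega : k - i ≤ k) y
          nlinarith [norm_nonneg (iteratedDeriv i e x),
            norm_nonneg (iteratedDeriv (k-i) g y),
            norm_nonneg (iteratedDeriv i e x - iteratedDeriv i e y),
            norm_nonneg (iteratedDeriv (k-i) g x - iteratedDeriv (k-i) g y),
            abs_nonneg (x - y),
            mul_le_mul hA1 hlipB (norm_nonneg _) zero_le_one,
            mul_le_mul hlipA hBb (norm_nonneg _) (by positivity : (0:ℝ) ≤ 1 * |x - y|)]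
        have hchT := CH_of_lip hα hα' (by positivity : (0:ℝ) ≤ 2*N) hperT hlipT
        have := CH_mono (by nlinarith : Real.pi * (2*N) ≤ (1 + 2*Real.pi) * N) hchT a b
        exact this
    calc ‖(∑ i ∈ Finset.range (k+1),
            ((k.choose i : ℂ)) * (iteratedDeriv i e a * iteratedDeriv (k-i) g a))
          - ∑ i ∈ Finset.range (k+1),
            ((k.choose i : ℂ)) * (iteratedDeriv i e b * iteratedDeriv (k-i) g b)‖
        = ‖∑ i ∈ Finset.range (k+1), ((k.choose i : ℂ)) *
            (iteratedDeriv i e a * iteratedDeriv (k-i) g a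
              - iteratedDeriv i e b * iteratedDeriv (k-i) g b)‖ := by
          rw [← Finset.sum_sub_distrib]
          congr 1
          apply Finset.sum_congr rfl
          intro i _
          ring
      _ ≤ ∑ i ∈ Finset.range (k+1), ‖((k.choose i : ℂ)) *
            (iteratedDeriv i e a * iteratedDeriv (k-i) g a
              - iteratedDeriv i e b * iteratedDeriv (k-i) g b)‖ := norm_sum_le _ _
      _ ≤ ∑ i ∈ Finset.range (k+1), ((k.choose i : ℝ)) * ((1 + 2*Real.pi) * N * D) := by
          apply Finset.sum_le_sum
          intro i hi
          rw [norm_mul]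
          have h1 : ‖((k.choose i : ℕ) : ℂ)‖ = ((k.choose i : ℕ) : ℝ) := by simp
          rw [h1]
          exact mul_le_mul_of_nonneg_left (hT i hi) (Nat.cast_nonneg _)
      _ = 2^k * ((1 + 2*Real.pi) * N) * D := by
          rw [← Finset.sum_mul]
          have h2 : (∑ i ∈ Finset.range (k+1), ((k.choose i : ℕ) : ℝ)) = (2^k : ℝ) := by
            exact_mod_cast Nat.sum_range_choose k
          rw [h2]
          ring
  have hCHnn : (0:ℝ) ≤ 2^k * ((1 + 2*Real.pi) * N) := by positivity
  constructor
  · constructor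
    · show ContDiff ℝ (k : ℕ∞) (liftC (fun z => E z * f z))
      rw [hlift]
      exact (hE k).mul hgC
    · refine ⟨(2^k * ((1 + 2*Real.pi) * N)).toNNReal, ?_⟩
      rw [hlift]
      exact holderWith_of_CH hα.le hCHnn hCH
  · show normCkR k α (fun z => E z * f z) ≤ CkB k * N
    unfold normCkR
    rw [hlift]
    have hhs : holderSem α (iteratedDeriv k (fun θ => e θ * g θ))
        ≤ 2^k * ((1 + 2*Real.pi) * N) := holderSem_le hCHnn hCH
    unfold CkB
    nlinarith [hsupsum, hhs]

lemma iD_add {n : ℕ} {g1 g2 : ℝ → ℂ} (h1 : ContDiff ℝ (n : ℕ∞) g1)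
    (h2 : ContDiff ℝ (n : ℕ∞) g2) :
    iteratedDeriv n (fun x => g1 x + g2 x) = fun x => iteratedDeriv n g1 x + iteratedDeriv n g2 x := by
  funext x
  rw [iteratedDeriv_eq_iteratedFDeriv, iteratedDeriv_eq_iteratedFDeriv,
    iteratedDeriv_eq_iteratedFDeriv]
  have := iteratedFDeriv_add_apply (i := n) (x := x) h1.contDiffAt h2.contDiffAt
  rw [show (fun x => g1 x + g2 x) = g1 + g2 from rfl, this]
  rfl

lemma key_add {k : ℕ} {α : ℝ} (hα : 0 < α) (hα' : α ≤ 1)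
    (f₁ f₂ : Circle → ℂ) (h₁ : IsCkC k α f₁) (h₂ : IsCkC k α f₂) :
    IsCkC k α (fun z => f₁ z + f₂ z) ∧
      normCkR k α (fun z => f₁ z + f₂ z) ≤ normCkR k α f₁ + normCkR k α f₂ := by
  set g1 := liftC f₁ with hg1
  set g2 := liftC f₂ with hg2
  have hlift : liftC (fun z => f₁ z + f₂ z) = fun θ => g1 θ + g2 θ := rfl
  have hiD : ∀ n : ℕ, n ≤ k → iteratedDeriv n (fun θ => g1 θ + g2 θ)
      = fun x => iteratedDeriv n g1 x + iteratedDeriv n g2 x := by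
    intro n hn
    exact iD_add (h₁.1.of_le (by exact_mod_cast Nat.cast_le.2 hn))
      (h₂.1.of_le (by exact_mod_cast Nat.cast_le.2 hn))
  have hsup : ∀ n : ℕ, n ≤ k → supN (iteratedDeriv n (fun θ => g1 θ + g2 θ))
      ≤ supN (iteratedDeriv n g1) + supN (iteratedDeriv n g2) := by
    intro n hn
    obtain ⟨B1, hB10, hB1⟩ := isCkC_bdd h₁ hn
    obtain ⟨B2, hB20, hB2⟩ := isCkC_bdd h₂ hn
    apply supN_le (add_nonneg (supN_nonneg _) (supN_nonneg _))
    intro θ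
    have hc := congrFun (hiD n hn) θ
    rw [hc]
    exact le_trans (norm_add_le _ _) (add_le_add (le_supN hB1 θ) (le_supN hB2 θ))
  set H1 := holderSem α (iteratedDeriv k g1) with hH1
  set H2 := holderSem α (iteratedDeriv k g2) with hH2
  have hH10 : 0 ≤ H1 := holderSem_nonneg _ _
  have hH20 : 0 ≤ H2 := holderSem_nonneg _ _
  have hch1 : CH α H1 (iteratedDeriv k g1) := isCkC_CH hα hα' h₁
  have hch2 : CH α H2 (iteratedDeriv k g2) := isCkC_CH hα hα' h₂
  have hCH : CH α (H1 + H2) (iteratedDeriv k (fun θ => g1 θ + g2 θ)) := by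
    intro a b
    rw [congrFun (hiD k le_rfl) a, congrFun (hiD k le_rfl) b]
    have h3 : iteratedDeriv k g1 a + iteratedDeriv k g2 a
        - (iteratedDeriv k g1 b + iteratedDeriv k g2 b)
        = (iteratedDeriv k g1 a - iteratedDeriv k g1 b)
          + (iteratedDeriv k g2 a - iteratedDeriv k g2 b) := by ring
    rw [h3]
    refine le_trans (norm_add_le _ _) ?_
    rw [add_mul]
    exact add_le_add (hch1 a b) (hch2 a b)
  constructor
  · constructor
    · show ContDiff ℝ (k : ℕ∞) (liftC (fun z => f₁ z + f₂ z))
      rw [hlift]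
      exact h₁.1.add h₂.1
    · refine ⟨(H1 + H2).toNNReal, ?_⟩
      rw [hlift]
      exact holderWith_of_CH hα.le (add_nonneg hH10 hH20) hCH
  · have hsum : ∑ n ∈ Finset.range (k+1), supN (iteratedDeriv n (fun θ => g1 θ + g2 θ))
        ≤ ∑ n ∈ Finset.range (k+1), (supN (iteratedDeriv n g1) + supN (iteratedDeriv n g2)) :=
      Finset.sum_le_sum fun n hn => hsup n (Nat.lt_succ_iff.1 (Finset.mem_range.1 hn))
    rw [Finset.sum_add_distrib] at hsum
    have hhs : holderSem α (iteratedDeriv k (fun θ => g1 θ + g2 θ)) ≤ H1 + H2 :=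
      holderSem_le (add_nonneg hH10 hH20) hCH
    show normCkR k α (fun z => f₁ z + f₂ z) ≤ normCkR k α f₁ + normCkR k α f₂
    unfold normCkR
    rw [hlift]
    rw [← hg1, ← hg2, ← hH1, ← hH2]
    linarith

lemma liftC_reC : liftC (fun z : Circle => (((z:ℂ).re : ℝ) : ℂ))
    = fun θ => ((Real.cos θ : ℝ) : ℂ) := by
  funext θ
  show (((Circle.exp θ : ℂ).re : ℝ) : ℂ) = _
  rw [Circle.coe_exp, Complex.exp_ofReal_mul_I_re]

lemma liftC_imC : liftC (fun z : Circle => (((z:ℂ).im : ℝ) : ℂ))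
    = fun θ => ((Real.sin θ : ℝ) : ℂ) := by
  funext θ
  show (((Circle.exp θ : ℂ).im : ℝ) : ℂ) = _
  rw [Circle.coe_exp, Complex.exp_ofReal_mul_I_im]

def NiceE (E : Circle → ℂ) : Prop :=
  (∀ m : ℕ, ContDiff ℝ (m : ℕ∞) (liftC E)) ∧
    ∀ (n : ℕ) (θ : ℝ), ‖iteratedDeriv n (liftC E) θ‖ ≤ 1

lemma nice_reC : NiceE (fun z : Circle => (((z:ℂ).re : ℝ) : ℂ)) := by
  constructor
  · intro m; rw [liftC_reC]; exact cosC_contDiff m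
  · intro n θ; rw [liftC_reC]; exact cosC_bound n θ

lemma nice_imC : NiceE (fun z : Circle => (((z:ℂ).im : ℝ) : ℂ)) := by
  constructor
  · intro m; rw [liftC_imC]; exact sinC_contDiff m
  · intro n θ; rw [liftC_imC]; exact sinC_bound n θ

lemma nice_neg {E : Circle → ℂ} (h : NiceE E) : NiceE (fun z => -E z) := by
  have hl : liftC (fun z => -E z) = fun θ => -(liftC E θ) := rfl
  constructor
  · intro m; rw [hl]; exact (h.1 m).neg
  · intro n θ
    rw [hl]
    have := iteratedDeriv_neg n (liftC E) θ
    rw [show (fun x => -liftC E x) = -liftC E from rfl, this, norm_neg]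
    exact h.2 n θ

lemma combo {k : ℕ} {α : ℝ} (hα : 0 < α) (hα' : α ≤ 1)
    (E₁ E₂ f₁ f₂ : Circle → ℂ) (h1 : NiceE E₁) (h2 : NiceE E₂)
    (hf1 : IsCkC k α f₁) (hf2 : IsCkC k α f₂) :
    IsCkC k α (fun z => E₁ z * f₁ z + E₂ z * f₂ z) ∧
      normCkR k α (fun z => E₁ z * f₁ z + E₂ z * f₂ z)
        ≤ CkB k * (normCkR k α f₁ + normCkR k α f₂) := by
  obtain ⟨hc1, hn1⟩ := key_mul hα hα' E₁ f₁ h1.1 h1.2 hf1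
  obtain ⟨hc2, hn2⟩ := key_mul hα hα' E₂ f₂ h2.1 h2.2 hf2
  obtain ⟨hc, hn⟩ := key_add hα hα' _ _ hc1 hc2
  refine ⟨hc, ?_⟩
  have := CkB_pos k
  nlinarith [normCkR_nonneg k α f₁, normCkR_nonneg k α f₂]

/-- The map `u ↦ M(ξ) u`, `M(ξ) = [[Re ξ, Im ξ], [-Im ξ, Re ξ]]`, is a
Banach space isomorphism from `(C^{k,α}_o)²` onto `(C^{k,α}_e)²`. -/
theorem stmt_10 (k : ℕ) (α : ℝ) (hα : 0 < α) (hα' : α < 1) :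
    let σ : (Fin 2 → Circle → ℂ) → (Fin 2 → Circle → ℂ) := fun u => fun i z =>
      (Matrix.mulVec
        !![(((z : ℂ).re : ℂ)), (((z : ℂ).im : ℂ));
           (-((z : ℂ).im : ℂ)), (((z : ℂ).re : ℂ))]
        (fun j => u j z)) i
    Set.BijOn σ {u | ∀ i, u i ∈ CkOdd k α} {u | ∀ i, u i ∈ CkEven k α} ∧
    (∀ u w, σ (u + w) = σ u + σ w) ∧
    (∀ (c : ℝ) (u), σ (c • u) = c • σ u) ∧
    ∃ C > 0, ∀ u : Fin 2 → Circle → ℂ, (∀ i, u i ∈ CkOdd k α) →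
      (∑ i, normCkR k α (σ u i)) ≤ C * (∑ i, normCkR k α (u i)) ∧
      (∑ i, normCkR k α (u i)) ≤ C * (∑ i, normCkR k α (σ u i)) := by
  intro σ
  have hα1 : α ≤ 1 := le_of_lt hα'
  set E1 : Circle → ℂ := fun z => (((z:ℂ).re : ℝ) : ℂ) with hE1
  set E2 : Circle → ℂ := fun z => (((z:ℂ).im : ℝ) : ℂ) with hE2
  set E2n : Circle → ℂ := fun z => -E2 z with hE2n
  have hniceE1 : NiceE E1 := nice_reC
  have hniceE2 : NiceE E2 := nice_imC
  have hniceE2n : NiceE E2n := nice_neg nice_imC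
  have hsq : ∀ z : Circle, (((z:ℂ).re : ℂ))^2 + (((z:ℂ).im : ℂ))^2 = 1 := by
    intro z
    have h := Circle.normSq_coe z
    rw [Complex.normSq_apply] at h
    calc (((z:ℂ).re : ℂ))^2 + (((z:ℂ).im : ℂ))^2
        = ((((z:ℂ).re * (z:ℂ).re + (z:ℂ).im * (z:ℂ).im : ℝ)) : ℂ) := by push_cast; ring
      _ = 1 := by rw [h]; norm_num
  have hσ0 : ∀ (u : Fin 2 → Circle → ℂ) (z : Circle),
      σ u 0 z = E1 z * u 0 z + E2 z * u 1 z := by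
    intro u z
    simp only [σ, hE1, hE2]
    simp [Matrix.mulVec, dotProduct, Fin.sum_univ_two]
  have hσ1 : ∀ (u : Fin 2 → Circle → ℂ) (z : Circle),
      σ u 1 z = E2n z * u 0 z + E1 z * u 1 z := by
    intro u z
    simp only [σ, hE1, hE2n, hE2]
    simp [Matrix.mulVec, dotProduct, Fin.sum_univ_two]
  have hfun0 : ∀ u : Fin 2 → Circle → ℂ, σ u 0 = fun z => E1 z * u 0 z + E2 z * u 1 z :=
    fun u => funext (hσ0 u)
  have hfun1 : ∀ u : Fin 2 → Circle → ℂ, σ u 1 = fun z => E2n z * u 0 z + E1 z * u 1 z :=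
    fun u => funext (hσ1 u)
  -- forward membership and bounds
  have hmemF : ∀ u : Fin 2 → Circle → ℂ, (∀ i, u i ∈ CkOdd k α) →
      (∀ i, σ u i ∈ CkEven k α) ∧
      normCkR k α (σ u 0) ≤ CkB k * (normCkR k α (u 0) + normCkR k α (u 1)) ∧
      normCkR k α (σ u 1) ≤ CkB k * (normCkR k α (u 0) + normCkR k α (u 1)) := by
    intro u hu
    have h0 := combo hα hα1 E1 E2 (u 0) (u 1) hniceE1 hniceE2 (hu 0).1 (hu 1).1
    have h1 := combo hα hα1 E2n E1 (u 0) (u 1) hniceE2n hniceE1 (hu 0).1 (hu 1).1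
    rw [← hfun0 u] at h0
    rw [← hfun1 u] at h1
    refine ⟨?_, h0.2, h1.2⟩
    have hreal : ∀ i, IsRealValued (σ u i) := by
      intro i
      fin_cases i
      · intro z
        show (σ u 0 z).im = 0
        rw [hσ0 u z]
        simp [hE1, hE2, Complex.add_im, Complex.mul_im, (hu 0).2.1 z, (hu 1).2.1 z]
      · intro z
        show (σ u 1 z).im = 0
        rw [hσ1 u z]
        simp [hE1, hE2n, hE2, Complex.add_im, Complex.mul_im, (hu 0).2.1 z, (hu 1).2.1 z]
    have heven : ∀ i, ∀ z : Circle, σ u i (negCircle z) = σ u i z := by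
      intro i z
      have hne : ((negCircle z : Circle) : ℂ) = -(z:ℂ) := rfl
      have h00 := (hu 0).2.2 z
      have h11 := (hu 1).2.2 z
      fin_cases i
      · show σ u 0 (negCircle z) = σ u 0 z
        rw [hσ0 u (negCircle z), hσ0 u z]
        simp only [hE1, hE2, hne, Complex.neg_re, Complex.neg_im, h00, h11]
        push_cast
        ring
      · show σ u 1 (negCircle z) = σ u 1 z
        rw [hσ1 u (negCircle z), hσ1 u z]
        simp only [hE1, hE2n, hE2, hne, Complex.neg_re, Complex.neg_im, h00, h11]
        push_cast
        ring
    intro i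
    fin_cases i
    · exact ⟨h0.1, hreal 0, heven 0⟩
    · exact ⟨h1.1, hreal 1, heven 1⟩
  -- pointwise inversion identities
  have hinv0 : ∀ (u : Fin 2 → Circle → ℂ) (z : Circle),
      E1 z * σ u 0 z + E2n z * σ u 1 z = u 0 z := by
    intro u z
    rw [hσ0 u z, hσ1 u z]
    simp only [hE1, hE2n, hE2]
    linear_combination (u 0 z) * hsq z
  have hinv1 : ∀ (u : Fin 2 → Circle → ℂ) (z : Circle),
      E2 z * σ u 0 z + E1 z * σ u 1 z = u 1 z := by
    intro u z
    rw [hσ0 u z, hσ1 u z]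
    simp only [hE1, hE2n, hE2]
    linear_combination (u 1 z) * hsq z
  refine ⟨⟨?_, ?_, ?_⟩, ?_, ?_, ?_⟩
  · -- MapsTo
    intro u hu
    exact (hmemF u hu).1
  · -- InjOn
    intro u hu u' hu' h
    funext i z
    fin_cases i
    · show u 0 z = u' 0 z
      rw [← hinv0 u z, ← hinv0 u' z, h]
    · show u 1 z = u' 1 z
      rw [← hinv1 u z, ← hinv1 u' z, h]
  · -- SurjOn
    intro v hv
    set w : Fin 2 → Circle → ℂ :=
      ![fun z => E1 z * v 0 z + E2n z * v 1 z, fun z => E2 z * v 0 z + E1 z * v 1 z] with hw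
    have hw0 : w 0 = fun z => E1 z * v 0 z + E2n z * v 1 z := rfl
    have hw1 : w 1 = fun z => E2 z * v 0 z + E1 z * v 1 z := rfl
    have hc0 := combo hα hα1 E1 E2n (v 0) (v 1) hniceE1 hniceE2n (hv 0).1 (hv 1).1
    have hc1 := combo hα hα1 E2 E1 (v 0) (v 1) hniceE2 hniceE1 (hv 0).1 (hv 1).1
    have hwodd : ∀ i, w i ∈ CkOdd k α := by
      intro i
      have hreal0 := (hv 0).2.1
      have hreal1 := (hv 1).2.1
      have hev0 := (hv 0).2.2
      have hev1 := (hv 1).2.2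
      fin_cases i
      · show w 0 ∈ CkOdd k α
        refine ⟨by rw [hw0]; exact hc0.1, ?_, ?_⟩
        · intro z
          rw [hw0]
          simp [hE1, hE2n, hE2, Complex.add_im, Complex.mul_im, hreal0 z, hreal1 z]
        · intro z
          rw [hw0]
          have hne : ((negCircle z : Circle) : ℂ) = -(z:ℂ) := rfl
          simp only [hE1, hE2n, hE2, hne, Complex.neg_re, Complex.neg_im, hev0 z, hev1 z]
          push_cast
          ring
      · show w 1 ∈ CkOdd k α
        refine ⟨by rw [hw1]; exact hc1.1, ?_, ?_⟩
        · intro z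
          rw [hw1]
          simp [hE1, hE2, Complex.add_im, Complex.mul_im, hreal0 z, hreal1 z]
        · intro z
          rw [hw1]
          have hne : ((negCircle z : Circle) : ℂ) = -(z:ℂ) := rfl
          simp only [hE1, hE2, hne, Complex.neg_re, Complex.neg_im, hev0 z, hev1 z]
          push_cast
          ring
    refine ⟨w, hwodd, ?_⟩
    funext i z
    fin_cases i
    · show σ w 0 z = v 0 z
      rw [hσ0 w z, hw0, hw1]
      simp only [hE1, hE2n, hE2]
      linear_combination (v 0 z) * hsq z
    · show σ w 1 z = v 1 z
      rw [hσ1 w z, hw0, hw1]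
      simp only [hE1, hE2n, hE2]
      linear_combination (v 1 z) * hsq z
  · -- additivity
    intro u w
    funext i z
    have hadd0 : (u + w) 0 z = u 0 z + w 0 z := rfl
    have hadd1 : (u + w) 1 z = u 1 z + w 1 z := rfl
    fin_cases i
    · show σ (u + w) 0 z = σ u 0 z + σ w 0 z
      rw [hσ0 (u + w) z, hσ0 u z, hσ0 w z, hadd0, hadd1]
      ring
    · show σ (u + w) 1 z = σ u 1 z + σ w 1 z
      rw [hσ1 (u + w) z, hσ1 u z, hσ1 w z, hadd0, hadd1]
      ring
  · -- smul
    intro c u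
    funext i z
    have hs0 : (c • u) 0 z = (c : ℂ) * u 0 z := by
      simp [Pi.smul_apply, Complex.real_smul]
    have hs1 : (c • u) 1 z = (c : ℂ) * u 1 z := by
      simp [Pi.smul_apply, Complex.real_smul]
    fin_cases i
    · show σ (c • u) 0 z = (c • σ u) 0 z
      have : (c • σ u) 0 z = (c : ℂ) * σ u 0 z := by
        simp [Pi.smul_apply, Complex.real_smul]
      rw [this, hσ0 (c • u) z, hσ0 u z, hs0, hs1]
      ring
    · show σ (c • u) 1 z = (c • σ u) 1 z
      have : (c • σ u) 1 z = (c : ℂ) * σ u 1 z := by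
        simp [Pi.smul_apply, Complex.real_smul]
      rw [this, hσ1 (c • u) z, hσ1 u z, hs0, hs1]
      ring
  · -- norm equivalence
    refine ⟨2 * CkB k, by linarith [CkB_pos k], ?_⟩
    intro u hu
    obtain ⟨hmem, hb0, hb1⟩ := hmemF u hu
    have hCk := CkB_pos k
    have hN0 := normCkR_nonneg k α (u 0)
    have hN1 := normCkR_nonneg k α (u 1)
    constructor
    · rw [Fin.sum_univ_two, Fin.sum_univ_two]
      linarith
    · -- reverse bound via inversion
      have hr0 : u 0 = fun z => E1 z * σ u 0 z + E2n z * σ u 1 z :=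
        funext fun z => (hinv0 u z).symm
      have hr1 : u 1 = fun z => E2 z * σ u 0 z + E1 z * σ u 1 z :=
        funext fun z => (hinv1 u z).symm
      have hcs0 : IsCkC k α (σ u 0) := (hmem 0).1
      have hcs1 : IsCkC k α (σ u 1) := (hmem 1).1
      have hc0 := combo hα hα1 E1 E2n (σ u 0) (σ u 1) hniceE1 hniceE2n hcs0 hcs1
      have hc1 := combo hα hα1 E2 E1 (σ u 0) (σ u 1) hniceE2 hniceE1 hcs0 hcs1
      rw [← hr0] at hc0
      rw [← hr1] at hc1
      rw [Fin.sum_univ_two, Fin.sum_univ_two]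
      have hs0 := normCkR_nonneg k α (σ u 0)
      have hs1 := normCkR_nonneg k α (σ u 1)
      linarith [hc0.2, hc1.2]
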